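/- arXiv:1304.3074 — 2 statements merged into one kernel-verified Lean document; each statement's English description precedes it below -/
import Mathlib

section
/- Scarf's explicit worst-case cost formula: under b > c, c+h > 0, μ > 0, σ > 0 and M the set of probability measures on ℝ₊ with mean μ and second moment μ²+σ², ψ(x) = c·μ + ((b+h)/2)·√((x−μ)²+σ²) − ((b−h−2c)/2)(x−μ) for x ≥ (μ²+σ²)/(2μ); ψ(x) = ((h+c)σ² − (b−c)μ²)/(μ²+σ²)·x + b·μ for 0 ≤ x < (μ²+σ²)/(2μ); and ψ(x) = b·μ − (b−c)x for x < 0. -/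
open MeasureTheory Set

set_option maxHeartbeats 1000000

/-- Membership in the moment family: probability measures on ℝ₊ with mean μ
and second moment μ²+σ². -/
def inMomentFamily (μ σ : ℝ) (Q : MeasureTheory.Measure ℝ) : Prop :=
  MeasureTheory.IsProbabilityMeasure Q ∧ Q (Set.Ici (0:ℝ))ᶜ = 0 ∧
    MeasureTheory.Integrable id Q ∧ MeasureTheory.Integrable (fun t => t ^ 2) Q ∧
    (∫ t, t ∂Q) = μ ∧ (∫ t, t ^ 2 ∂Q) = μ ^ 2 + σ ^ 2

/-- Scarf's worst-case cost ψ(x). -/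
noncomputable def scarfPsi (c b h μ σ : ℝ) (x : ℝ) : ℝ :=
  sSup ((fun Q : MeasureTheory.Measure ℝ =>
    ∫ d, c * x + b * max (d - x) 0 + h * max (x - d) 0 ∂Q) ''
      {Q | inMomentFamily μ σ Q})

/-! ### Auxiliary measure-theoretic lemmas -/

lemma my_integrable_dirac (f : ℝ → ℝ) (a : ℝ) : Integrable f (Measure.dirac a) := by
  have h : f =ᵐ[Measure.dirac a] fun _ => f a := by
    rw [MeasureTheory.ae_dirac_eq]
    exact Filter.eventually_pure.2 rfl
  exact (integrable_congr h).2 (integrable_const _)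

lemma my_twoPoint_integral (f : ℝ → ℝ) (p q d1 d2 : ℝ) (hp : 0 ≤ p) (hq : 0 ≤ q) :
    ∫ t, f t ∂(ENNReal.ofReal p • Measure.dirac d1 + ENNReal.ofReal q • Measure.dirac d2)
      = p * f d1 + q * f d2 := by
  rw [integral_add_measure ((my_integrable_dirac f d1).smul_measure ENNReal.ofReal_ne_top)
    ((my_integrable_dirac f d2).smul_measure ENNReal.ofReal_ne_top),
    integral_smul_measure, integral_smul_measure, integral_dirac, integral_dirac,
    ENNReal.toReal_ofReal hp, ENNReal.toReal_ofReal hq, smul_eq_mul, smul_eq_mul]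

lemma my_twoPoint_family (μ σ p q d1 d2 : ℝ) (hp : 0 ≤ p) (hq : 0 ≤ q)
    (hpq : p + q = 1) (h1 : 0 ≤ d1) (h2 : 0 ≤ d2)
    (hm : p * d1 + q * d2 = μ) (hm2 : p * d1 ^ 2 + q * d2 ^ 2 = μ ^ 2 + σ ^ 2) :
    inMomentFamily μ σ
      (ENNReal.ofReal p • Measure.dirac d1 + ENNReal.ofReal q • Measure.dirac d2) := by
  have hint : ∀ f : ℝ → ℝ, Integrable f
      (ENNReal.ofReal p • Measure.dirac d1 + ENNReal.ofReal q • Measure.dirac d2) := fun f =>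
    ((my_integrable_dirac f d1).smul_measure ENNReal.ofReal_ne_top).add_measure
      ((my_integrable_dirac f d2).smul_measure ENNReal.ofReal_ne_top)
  refine ⟨⟨?_⟩, ?_, hint id, hint _, ?_, ?_⟩
  · simp only [Measure.add_apply, Measure.smul_apply, measure_univ, smul_eq_mul, mul_one]
    rw [← ENNReal.ofReal_add hp hq, hpq, ENNReal.ofReal_one]
  · have e1 : Measure.dirac d1 (Set.Ici (0:ℝ))ᶜ = 0 := by
      rw [Measure.dirac_apply]
      simp [Set.indicator_of_notMem, h1]
    have e2 : Measure.dirac d2 (Set.Ici (0:ℝ))ᶜ = 0 := by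
      rw [Measure.dirac_apply]
      simp [Set.indicator_of_notMem, h2]
    rw [Measure.add_apply, Measure.smul_apply, Measure.smul_apply, e1, e2]
    simp
  · have := my_twoPoint_integral (fun t => t) p q d1 d2 hp hq
    simpa using this.trans hm
  · have := my_twoPoint_integral (fun t => t ^ 2) p q d1 d2 hp hq
    simpa using this.trans hm2

lemma my_cost_integrable (c b h x : ℝ) (Q : Measure ℝ) (hprob : IsProbabilityMeasure Q)
    (hint1 : Integrable id Q) :
    Integrable (fun d => c * x + b * max (d - x) 0 + h * max (x - d) 0) Q := by
  have hmax1 : Integrable (fun d : ℝ => max (d - x) 0) Q := by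
    have := (hint1.sub (integrable_const x)).sup (integrable_const (0:ℝ))
    exact this.congr (ae_of_all _ fun d => rfl)
  have hmax2 : Integrable (fun d : ℝ => max (x - d) 0) Q := by
    have := ((integrable_const x).sub hint1).sup (integrable_const (0:ℝ))
    exact this.congr (ae_of_all _ fun d => rfl)
  exact ((integrable_const (c * x)).add (hmax1.const_mul b)).add (hmax2.const_mul h)

lemma my_cost_le (c b h μ σ x α β γ : ℝ) (Q : Measure ℝ) (hQ : inMomentFamily μ σ Q)
    (hpt : ∀ d : ℝ, 0 ≤ d →
      c * x + b * max (d - x) 0 + h * max (x - d) 0 ≤ α + β * d + γ * d ^ 2) :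
    ∫ d, c * x + b * max (d - x) 0 + h * max (x - d) 0 ∂Q
      ≤ α + β * μ + γ * (μ ^ 2 + σ ^ 2) := by
  obtain ⟨hprob, hsupp, hint1, hint2, hμQ, hσQ⟩ := hQ
  have hf := my_cost_integrable c b h x Q hprob hint1
  have hg1 : Integrable (fun d : ℝ => β * d) Q := by simpa [id] using hint1.const_mul β
  have hg2 : Integrable (fun d : ℝ => γ * d ^ 2) Q := hint2.const_mul γ
  have hg : Integrable (fun d : ℝ => α + β * d + γ * d ^ 2) Q :=
    ((integrable_const α).add hg1).add hg2
  have hae : ∀ᵐ d ∂Q, 0 ≤ d := by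
    have hset : {d : ℝ | ¬ 0 ≤ d} = (Set.Ici (0:ℝ))ᶜ := by ext d; simp
    rw [ae_iff, hset, hsupp]
  have hle : ∀ᵐ d ∂Q, c * x + b * max (d - x) 0 + h * max (x - d) 0
      ≤ α + β * d + γ * d ^ 2 := hae.mono fun d hd => hpt d hd
  calc ∫ d, c * x + b * max (d - x) 0 + h * max (x - d) 0 ∂Q
      ≤ ∫ d, α + β * d + γ * d ^ 2 ∂Q := integral_mono_ae hf hg hle
    _ = α + β * μ + γ * (μ ^ 2 + σ ^ 2) := by
        have e2 : ∫ d, (α + β * d) + γ * d ^ 2 ∂Q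
            = (∫ d, α + β * d ∂Q) + ∫ d, γ * d ^ 2 ∂Q :=
          integral_add ((integrable_const α).add hg1) hg2
        have e1 : ∫ d, α + β * d ∂Q = (∫ _, α ∂Q) + ∫ d, β * d ∂Q :=
          integral_add (integrable_const α) hg1
        rw [e2, e1, integral_const, integral_const_mul, integral_const_mul]
        have h1 : ∫ d, d ∂Q = μ := hμQ
        rw [h1, hσQ]
        simp [measure_univ]

lemma my_scarf_aux (c b h μ σ x V α β γ : ℝ)
    (Q : Measure ℝ) (hQ : inMomentFamily μ σ Q)
    (hVal : ∫ d, c * x + b * max (d - x) 0 + h * max (x - d) 0 ∂Q = V)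
    (hpt : ∀ d : ℝ, 0 ≤ d →
      c * x + b * max (d - x) 0 + h * max (x - d) 0 ≤ α + β * d + γ * d ^ 2)
    (hsum : α + β * μ + γ * (μ ^ 2 + σ ^ 2) = V) :
    scarfPsi c b h μ σ x = V := by
  have hG : IsGreatest ((fun Q : MeasureTheory.Measure ℝ =>
      ∫ d, c * x + b * max (d - x) 0 + h * max (x - d) 0 ∂Q) ''
        {Q | inMomentFamily μ σ Q}) V :=
    ⟨⟨Q, hQ, hVal⟩, by
      rintro v ⟨Q', hQ', rfl⟩
      exact hsum ▸ my_cost_le c b h μ σ x α β γ Q' hQ' hpt⟩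
  exact hG.csSup_eq

/-! ### Pointwise quadratic majorization lemmas -/

lemma my_pt1 (b c h x s d A0 : ℝ) (hs : 0 < s) (hbh : 0 < b + h)
    (hA0d : A0 = (b + h) / (4 * s)) :
    c * x + b * max (d - x) 0 + h * max (x - d) 0 ≤
      (c * x - b * x + A0 * (x + s) ^ 2) + (b - 2 * A0 * (x + s)) * d + A0 * d ^ 2 := by
  have hA0 : 0 ≤ A0 := by rw [hA0d]; positivity
  have h4 : A0 * (4 * s) = b + h := by rw [hA0d]; field_simp
  have key : (b + h) * (d - x) + A0 * (d - x - s) ^ 2 = A0 * (d - x + s) ^ 2 := by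
    linear_combination (x - d) * h4
  rcases le_total d x with hdx | hdx
  · rw [max_eq_right (by linarith : d - x ≤ (0:ℝ)),
      max_eq_left (by linarith : (0:ℝ) ≤ x - d)]
    nlinarith [key, mul_nonneg hA0 (sq_nonneg (d - x + s))]
  · rw [max_eq_left (by linarith : (0:ℝ) ≤ d - x),
      max_eq_right (by linarith : x - d ≤ (0:ℝ))]
    nlinarith [mul_nonneg hA0 (sq_nonneg (d - (x + s)))]

lemma my_pt2 (b c h x a d γ2 : ℝ) (ha : 0 < a) (hx0 : 0 ≤ x) (h2xa : 2 * x ≤ a)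
    (hbh : 0 < b + h) (hγ2d : γ2 = (b + h) * x / a ^ 2) (hd : 0 ≤ d) :
    c * x + b * max (d - x) 0 + h * max (x - d) 0 ≤
      (c * x - b * x + γ2 * a ^ 2) + (b - 2 * γ2 * a) * d + γ2 * d ^ 2 := by
  have hγ2 : 0 ≤ γ2 := by
    rw [hγ2d]; exact div_nonneg (mul_nonneg hbh.le hx0) (by positivity)
  have hga : γ2 * a ^ 2 = (b + h) * x := by
    rw [hγ2d]; field_simp
  have key2 : 2 * γ2 * a ≤ b + h := by
    nlinarith [hga, mul_nonneg hbh.le (show (0:ℝ) ≤ a - 2 * x by linarith)]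
  rcases le_total d x with hdx | hdx
  · rw [max_eq_right (by linarith : d - x ≤ (0:ℝ)),
      max_eq_left (by linarith : (0:ℝ) ≤ x - d)]
    nlinarith [mul_nonneg hd (sub_nonneg.2 key2), mul_nonneg hγ2 (mul_nonneg hd hd), hga]
  · rw [max_eq_left (by linarith : (0:ℝ) ≤ d - x),
      max_eq_right (by linarith : x - d ≤ (0:ℝ))]
    nlinarith [mul_nonneg hγ2 (sq_nonneg (d - a))]

lemma my_pt3 (b c h x d : ℝ) (hx : x < 0) (hd : 0 ≤ d) :
    c * x + b * max (d - x) 0 + h * max (x - d) 0 ≤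
      (c * x - b * x) + b * d + 0 * d ^ 2 := by
  rw [max_eq_left (by linarith : (0:ℝ) ≤ d - x),
    max_eq_right (by linarith : x - d ≤ (0:ℝ))]
  nlinarith []

/-! ### Algebraic identities -/

lemma my_val1 (b c h μ x s : ℝ) (hs : s ≠ 0) :
    (s + x - μ) / (2 * s) * (c * x + b * 0 + h * (x - (x - s))) +
      (s - x + μ) / (2 * s) * (c * x + b * (x + s - x) + h * 0)
    = c * μ + (b + h) / 2 * s - (b - h - 2 * c) / 2 * (x - μ) := by
  field_simp; ring

lemma my_sum1 (b c h μ σ x s : ℝ) (hs : s ≠ 0) (hs2 : s ^ 2 = (x - μ) ^ 2 + σ ^ 2) :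
    (c * x - b * x + (b + h) / (4 * s) * (x + s) ^ 2) +
      (b - 2 * ((b + h) / (4 * s)) * (x + s)) * μ +
      (b + h) / (4 * s) * (μ ^ 2 + σ ^ 2)
    = c * μ + (b + h) / 2 * s - (b - h - 2 * c) / 2 * (x - μ) := by
  have hσ2 : σ ^ 2 = s ^ 2 - (x - μ) ^ 2 := by linarith
  rw [hσ2]; field_simp; ring

lemma my_mom11 (μ x s : ℝ) (hs : s ≠ 0) :
    (s + x - μ) / (2 * s) + (s - x + μ) / (2 * s) = 1 := by field_simp; ring

lemma my_mom12 (μ x s : ℝ) (hs : s ≠ 0) :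
    (s + x - μ) / (2 * s) * (x - s) + (s - x + μ) / (2 * s) * (x + s) = μ := by
  field_simp; ring

lemma my_mom13 (μ σ x s : ℝ) (hs : s ≠ 0) (hs2 : s ^ 2 = (x - μ) ^ 2 + σ ^ 2) :
    (s + x - μ) / (2 * s) * (x - s) ^ 2 + (s - x + μ) / (2 * s) * (x + s) ^ 2
      = μ ^ 2 + σ ^ 2 := by
  have hσ2 : σ ^ 2 = s ^ 2 - (x - μ) ^ 2 := by linarith
  rw [hσ2]; field_simp; ring

lemma my_mom01 (μ σ : ℝ) (hμ : μ ≠ 0) (hA : μ ^ 2 + σ ^ 2 ≠ 0) :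
    σ ^ 2 / (μ ^ 2 + σ ^ 2) + μ ^ 2 / (μ ^ 2 + σ ^ 2) = 1 := by field_simp; ring

lemma my_mom02 (μ σ : ℝ) (hμ : μ ≠ 0) (hA : μ ^ 2 + σ ^ 2 ≠ 0) :
    σ ^ 2 / (μ ^ 2 + σ ^ 2) * 0 + μ ^ 2 / (μ ^ 2 + σ ^ 2) * ((μ ^ 2 + σ ^ 2) / μ) = μ := by
  field_simp; ring

lemma my_mom03 (μ σ : ℝ) (hμ : μ ≠ 0) (hA : μ ^ 2 + σ ^ 2 ≠ 0) :
    σ ^ 2 / (μ ^ 2 + σ ^ 2) * 0 ^ 2 + μ ^ 2 / (μ ^ 2 + σ ^ 2) * ((μ ^ 2 + σ ^ 2) / μ) ^ 2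
      = μ ^ 2 + σ ^ 2 := by field_simp; ring

lemma my_val2 (b c h μ σ x : ℝ) (hμ : μ ≠ 0) (hA : μ ^ 2 + σ ^ 2 ≠ 0) :
    σ ^ 2 / (μ ^ 2 + σ ^ 2) * (c * x + b * 0 + h * (x - 0)) +
      μ ^ 2 / (μ ^ 2 + σ ^ 2) * (c * x + b * ((μ ^ 2 + σ ^ 2) / μ - x) + h * 0)
    = ((h + c) * σ ^ 2 - (b - c) * μ ^ 2) / (μ ^ 2 + σ ^ 2) * x + b * μ := by
  field_simp; ring

lemma my_sum2 (b c h μ σ x : ℝ) (hμ : μ ≠ 0) (hA : μ ^ 2 + σ ^ 2 ≠ 0) :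
    (c * x - b * x +
        (b + h) * x / ((μ ^ 2 + σ ^ 2) / μ) ^ 2 * ((μ ^ 2 + σ ^ 2) / μ) ^ 2) +
      (b - 2 * ((b + h) * x / ((μ ^ 2 + σ ^ 2) / μ) ^ 2) * ((μ ^ 2 + σ ^ 2) / μ)) * μ +
      (b + h) * x / ((μ ^ 2 + σ ^ 2) / μ) ^ 2 * (μ ^ 2 + σ ^ 2)
    = ((h + c) * σ ^ 2 - (b - c) * μ ^ 2) / (μ ^ 2 + σ ^ 2) * x + b * μ := by
  field_simp; ring

lemma my_val3 (b c h μ σ x : ℝ) (hμ : μ ≠ 0) (hA : μ ^ 2 + σ ^ 2 ≠ 0) :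
    σ ^ 2 / (μ ^ 2 + σ ^ 2) * (c * x + b * (0 - x) + h * 0) +
      μ ^ 2 / (μ ^ 2 + σ ^ 2) * (c * x + b * ((μ ^ 2 + σ ^ 2) / μ - x) + h * 0)
    = b * μ - (b - c) * x := by
  field_simp; ring

/-! ### Inequality facts for the square root -/

lemma my_sx (μ σ x s : ℝ) (hx0 : 0 < x) (hx2 : μ ^ 2 + σ ^ 2 ≤ 2 * μ * x)
    (hs2 : s ^ 2 = (x - μ) ^ 2 + σ ^ 2) (hs : 0 < s) : s ≤ x := by
  nlinarith [hs2, hs, hx0]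

lemma my_sl (μ σ x s : ℝ) (hσ : 0 < σ) (hs2 : s ^ 2 = (x - μ) ^ 2 + σ ^ 2) (hs : 0 < s) :
    μ - x ≤ s := by nlinarith [hs2, hs]

lemma my_sr (μ σ x s : ℝ) (hσ : 0 < σ) (hs2 : s ^ 2 = (x - μ) ^ 2 + σ ^ 2) (hs : 0 < s) :
    x - μ ≤ s := by nlinarith [hs2, hs]

lemma my_xpos (μ σ x : ℝ) (hμ : 0 < μ) (hσ : 0 < σ) (hx2 : μ ^ 2 + σ ^ 2 ≤ 2 * μ * x) :
    0 < x := by nlinarith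

/-- Scarf's explicit worst-case cost formula in each of the three regimes of x. -/
theorem scarf_psi_formula (b c h μ σ : ℝ) (hbc : c < b) (hch : 0 < c + h)
    (hμ : 0 < μ) (hσ : 0 < σ) :
    (∀ x : ℝ, (μ ^ 2 + σ ^ 2) / (2 * μ) ≤ x →
      scarfPsi c b h μ σ x = c * μ +
        (b + h) / 2 * Real.sqrt ((x - μ) ^ 2 + σ ^ 2) -
        (b - h - 2 * c) / 2 * (x - μ)) ∧
    (∀ x : ℝ, 0 ≤ x → x < (μ ^ 2 + σ ^ 2) / (2 * μ) →
      scarfPsi c b h μ σ x =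
        ((h + c) * σ ^ 2 - (b - c) * μ ^ 2) / (μ ^ 2 + σ ^ 2) * x + b * μ) ∧
    (∀ x : ℝ, x < 0 → scarfPsi c b h μ σ x = b * μ - (b - c) * x) := by
  have hbh : 0 < b + h := by linarith
  have hA : 0 < μ ^ 2 + σ ^ 2 := by positivity
  have hAne : μ ^ 2 + σ ^ 2 ≠ 0 := ne_of_gt hA
  have hμne : μ ≠ 0 := ne_of_gt hμ
  have ha : 0 < (μ ^ 2 + σ ^ 2) / μ := by positivity
  have hμa : μ * ((μ ^ 2 + σ ^ 2) / μ) = μ ^ 2 + σ ^ 2 := by field_simp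
  have hp : 0 ≤ σ ^ 2 / (μ ^ 2 + σ ^ 2) := by positivity
  have hq : 0 ≤ μ ^ 2 / (μ ^ 2 + σ ^ 2) := by positivity
  have hQ0 := my_twoPoint_family μ σ (σ ^ 2 / (μ ^ 2 + σ ^ 2)) (μ ^ 2 / (μ ^ 2 + σ ^ 2))
    0 ((μ ^ 2 + σ ^ 2) / μ) hp hq (my_mom01 μ σ hμne hAne) le_rfl ha.le
    (my_mom02 μ σ hμne hAne) (my_mom03 μ σ hμne hAne)
  refine ⟨?_, ?_, ?_⟩
  · -- Regime 1 : x ≥ (μ²+σ²)/(2μ)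
    intro x hx
    have hx2 : μ ^ 2 + σ ^ 2 ≤ 2 * μ * x := by
      rw [div_le_iff₀ (by positivity)] at hx; linarith
    have hx0 : 0 < x := my_xpos μ σ x hμ hσ hx2
    set s := Real.sqrt ((x - μ) ^ 2 + σ ^ 2) with hs_def
    have hs2 : s ^ 2 = (x - μ) ^ 2 + σ ^ 2 := Real.sq_sqrt (by positivity)
    have hs : 0 < s := Real.sqrt_pos.2 (by positivity)
    have hsne : s ≠ 0 := ne_of_gt hs
    have hsx : s ≤ x := my_sx μ σ x s hx0 hx2 hs2 hs
    have hl : μ - x ≤ s := my_sl μ σ x s hσ hs2 hs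
    have hr : x - μ ≤ s := my_sr μ σ x s hσ hs2 hs
    have hp1 : 0 ≤ (s + x - μ) / (2 * s) := div_nonneg (by linarith) (by linarith)
    have hp2 : 0 ≤ (s - x + μ) / (2 * s) := div_nonneg (by linarith) (by linarith)
    have hQ1 := my_twoPoint_family μ σ ((s + x - μ) / (2 * s)) ((s - x + μ) / (2 * s))
      (x - s) (x + s) hp1 hp2 (my_mom11 μ x s hsne) (by linarith) (by linarith)
      (my_mom12 μ x s hsne) (my_mom13 μ σ x s hsne hs2)
    refine my_scarf_aux c b h μ σ x _
      (c * x - b * x + (b + h) / (4 * s) * (x + s) ^ 2)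
      (b - 2 * ((b + h) / (4 * s)) * (x + s)) ((b + h) / (4 * s)) _ hQ1 ?_ ?_ ?_
    · rw [my_twoPoint_integral (fun d => c * x + b * max (d - x) 0 + h * max (x - d) 0)
        ((s + x - μ) / (2 * s)) ((s - x + μ) / (2 * s)) (x - s) (x + s) hp1 hp2]
      rw [max_eq_right (by linarith : x - s - x ≤ (0:ℝ)),
        max_eq_left (by linarith : (0:ℝ) ≤ x - (x - s)),
        max_eq_left (by linarith : (0:ℝ) ≤ x + s - x),
        max_eq_right (by linarith : x - (x + s) ≤ (0:ℝ))]
      exact my_val1 b c h μ x s hsne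
    · exact fun d _ => my_pt1 b c h x s d _ hs hbh rfl
    · exact my_sum1 b c h μ σ x s hsne hs2
  · -- Regime 2 : 0 ≤ x < (μ²+σ²)/(2μ)
    intro x hx0 hx1
    have h2x : 2 * μ * x < μ ^ 2 + σ ^ 2 := by
      rw [lt_div_iff₀ (by positivity)] at hx1; linarith
    have h2xa : 2 * x ≤ (μ ^ 2 + σ ^ 2) / μ := by
      rw [le_div_iff₀ hμ]; nlinarith
    have hxa : x < (μ ^ 2 + σ ^ 2) / μ := by
      have : 0 ≤ x := hx0
      nlinarith [h2xa]
    refine my_scarf_aux c b h μ σ x _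
      (c * x - b * x +
        (b + h) * x / ((μ ^ 2 + σ ^ 2) / μ) ^ 2 * ((μ ^ 2 + σ ^ 2) / μ) ^ 2)
      (b - 2 * ((b + h) * x / ((μ ^ 2 + σ ^ 2) / μ) ^ 2) * ((μ ^ 2 + σ ^ 2) / μ))
      ((b + h) * x / ((μ ^ 2 + σ ^ 2) / μ) ^ 2) _ hQ0 ?_ ?_ ?_
    · rw [my_twoPoint_integral (fun d => c * x + b * max (d - x) 0 + h * max (x - d) 0)
        (σ ^ 2 / (μ ^ 2 + σ ^ 2)) (μ ^ 2 / (μ ^ 2 + σ ^ 2)) 0 ((μ ^ 2 + σ ^ 2) / μ) hp hq]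
      rw [max_eq_right (by linarith : 0 - x ≤ (0:ℝ)),
        max_eq_left (by linarith : (0:ℝ) ≤ x - 0),
        max_eq_left (by linarith : (0:ℝ) ≤ (μ ^ 2 + σ ^ 2) / μ - x),
        max_eq_right (by linarith : x - (μ ^ 2 + σ ^ 2) / μ ≤ (0:ℝ))]
      exact my_val2 b c h μ σ x hμne hAne
    · exact fun d hd => my_pt2 b c h x ((μ ^ 2 + σ ^ 2) / μ) d _ ha hx0 h2xa hbh rfl hd
    · exact my_sum2 b c h μ σ x hμne hAne
  · -- Regime 3 : x < 0
    intro x hx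
    refine my_scarf_aux c b h μ σ x _ (c * x - b * x) b 0 _ hQ0 ?_ ?_ ?_
    · rw [my_twoPoint_integral (fun d => c * x + b * max (d - x) 0 + h * max (x - d) 0)
        (σ ^ 2 / (μ ^ 2 + σ ^ 2)) (μ ^ 2 / (μ ^ 2 + σ ^ 2)) 0 ((μ ^ 2 + σ ^ 2) / μ) hp hq]
      rw [max_eq_left (by linarith : (0:ℝ) ≤ 0 - x),
        max_eq_right (by linarith : x - 0 ≤ (0:ℝ)),
        max_eq_left (by linarith [ha] : (0:ℝ) ≤ (μ ^ 2 + σ ^ 2) / μ - x),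
        max_eq_right (by linarith [ha] : x - (μ ^ 2 + σ ^ 2) / μ ≤ (0:ℝ))]
      exact my_val3 b c h μ σ x hμne hAne
    · exact fun d hd => my_pt3 b c h x d hx hd
    · ring
end

section
/- For 0 < ε < (√6 − 2)/2, sup over product measures Q₁ × Q₂ of E[|10 − D₁ − D₂|] equals 3, where Q₁ ranges over probability measures on [1−ε,3+ε] with mean 2 and second moment 5, and Q₂ ranges over probability measures on [0,∞) with mean 8 and second moment 73. -/
open MeasureTheory Set
open scoped ENNReal

/-! ### Auxiliary lemmas -/

lemma integrable_dirac' {f : ℝ → ℝ} (hf : Continuous f) (a : ℝ) :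
    Integrable f (Measure.dirac a) := by
  refine ⟨hf.aestronglyMeasurable, ?_⟩
  simp [HasFiniteIntegral, lintegral_dirac]

lemma integrable_half_dirac {f : ℝ → ℝ} (hf : Continuous f) (a b : ℝ) :
    Integrable f ((2⁻¹ : ℝ≥0∞) • Measure.dirac a + (2⁻¹ : ℝ≥0∞) • Measure.dirac b) :=
  Integrable.add_measure
    ((integrable_smul_measure (by norm_num) (by norm_num)).mpr (integrable_dirac' hf a))
    ((integrable_smul_measure (by norm_num) (by norm_num)).mpr (integrable_dirac' hf b))

lemma integral_half_dirac (f : ℝ → ℝ) (hf : Continuous f) (a b : ℝ) :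
    ∫ t, f t ∂((2⁻¹ : ℝ≥0∞) • Measure.dirac a + (2⁻¹ : ℝ≥0∞) • Measure.dirac b)
      = (f a + f b) / 2 := by
  rw [integral_add_measure
      ((integrable_smul_measure (by norm_num) (by norm_num)).mpr (integrable_dirac' hf a))
      ((integrable_smul_measure (by norm_num) (by norm_num)).mpr (integrable_dirac' hf b)),
    integral_smul_measure, integral_smul_measure, integral_dirac, integral_dirac]
  norm_num [ENNReal.toReal_inv]
  ring

instance instProbHalfDirac (a b : ℝ) :
    IsProbabilityMeasure ((2⁻¹ : ℝ≥0∞) • Measure.dirac a + (2⁻¹ : ℝ≥0∞) • Measure.dirac b) := by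
  constructor
  simp [ENNReal.inv_two_add_inv_two]

lemma integral_affine (Q : Measure ℝ) [IsProbabilityMeasure Q]
    (hid : Integrable (fun t : ℝ => t) Q) (a b : ℝ) :
    ∫ t, (a + b * t) ∂Q = a + b * ∫ t, t ∂Q := by
  have hbt : Integrable (fun t : ℝ => b * t) Q := hid.const_mul b
  rw [integral_add (integrable_const a) hbt, integral_const, integral_const_mul]
  simp

/-- Key slice estimate: for any probability measure `Q1` supported in `[1-ε, 3+ε]`
with mean `2` and second moment `5`, and any `s`, the integral of `|10 - t - s|`
is at most `(s-8)²/6 + 3/2`. -/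
lemma slice_bound (ε : ℝ) (hε : 0 < ε) (hε4 : ε ≤ 1/4)
    (Q1 : Measure ℝ) [IsProbabilityMeasure Q1]
    (hsupp : ∀ᵐ t ∂Q1, t ∈ Icc (1-ε) (3+ε))
    (h1 : (∫ t, t ∂Q1) = 2) (h2 : (∫ t, t^2 ∂Q1) = 5) (s : ℝ) :
    (∫ t, |10 - t - s| ∂Q1) ≤ (s-8)^2/6 + 3/2 := by
  have hcont : Continuous fun t : ℝ => |10 - t - s| :=
    ((continuous_const.sub continuous_id).sub continuous_const).abs
  have hb : ∀ᵐ t ∂Q1, ‖|10 - t - s|‖ ≤ |10 - s| + 4 := by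
    filter_upwards [hsupp] with t ht
    have := le_abs_self (10 - s); have := neg_abs_le (10 - s)
    have h1 := ht.1; have h2 := ht.2
    rw [Real.norm_eq_abs, abs_abs, abs_le]
    constructor <;> linarith
  have int_abs : Integrable (fun t => |10 - t - s|) Q1 :=
    Integrable.mono' (integrable_const _) hcont.aestronglyMeasurable hb
  have int_id : Integrable (fun t : ℝ => t) Q1 := by
    refine Integrable.mono' (integrable_const (4:ℝ)) continuous_id.aestronglyMeasurable ?_
    filter_upwards [hsupp] with t ht
    rw [Real.norm_eq_abs, abs_le]; exact ⟨by linarith [ht.1], by linarith [ht.2]⟩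
  have int_sq : Integrable (fun t : ℝ => t^2) Q1 := by
    refine Integrable.mono' (integrable_const (16:ℝ))
      (continuous_pow 2).aestronglyMeasurable ?_
    filter_upwards [hsupp] with t ht
    rw [Real.norm_eq_abs, abs_le]
    constructor <;> nlinarith [ht.1, ht.2]
  have int_lin : Integrable (fun t : ℝ => -(20 - 2*s) * t + t^2) Q1 :=
    (int_id.const_mul _).add int_sq
  have int_f2 : Integrable (fun t : ℝ => (10 - t - s)^2) Q1 := by
    have e : (fun t : ℝ => (10 - t - s)^2)
        = fun t : ℝ => (10-s)^2 + (-(20 - 2*s) * t + t^2) := by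
      funext t; ring
    rw [e]
    exact (integrable_const _).add int_lin
  have hI2 : ∫ t, (10 - t - s)^2 ∂Q1 = (8-s)^2 + 1 := by
    have e : (fun t : ℝ => (10 - t - s)^2)
        = fun t : ℝ => (10-s)^2 + (-(20 - 2*s) * t + t^2) := by
      funext t; ring
    rw [e, integral_add (integrable_const _) int_lin,
      integral_add (int_id.const_mul _) int_sq, integral_const, integral_const_mul,
      h1, h2]
    simp; ring
  set m := ∫ t, |10 - t - s| ∂Q1 with hm
  have hm0 : 0 ≤ m := integral_nonneg fun t => abs_nonneg _
  rcases le_or_gt ((s-8)^2) 3 with hcase | hcase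
  · -- Cauchy–Schwarz case
    have hvar : 0 ≤ (8-s)^2 + 1 - m^2 := by
      have expand : (fun t : ℝ => (|10 - t - s| - m)^2)
          = fun t : ℝ => (10 - t - s)^2 + (-(2*m) * |10 - t - s| + m^2) := by
        funext t
        rw [sub_sq, sq_abs]; ring
      have int_lin2 : Integrable (fun t : ℝ => -(2*m) * |10 - t - s| + m^2) Q1 :=
        (int_abs.const_mul _).add (integrable_const _)
      have h0 : 0 ≤ ∫ t, (|10 - t - s| - m)^2 ∂Q1 :=
        integral_nonneg fun t => sq_nonneg _
      rw [expand, integral_add int_f2 int_lin2,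
        integral_add (int_abs.const_mul _) (integrable_const _), integral_const_mul,
        hI2, ← hm] at h0
      simp at h0
      nlinarith [h0]
    nlinarith [hvar, hm0, hcase, mul_nonneg (by linarith : (0:ℝ) ≤ 3 - (s-8)^2)
      (by nlinarith : (0:ℝ) ≤ 15 - (s-8)^2)]
  · rcases le_or_gt s 8 with hs | hs
    · have hs' : s ≤ 63/10 := by nlinarith
      have hae : (fun t : ℝ => |10 - t - s|) =ᵐ[Q1] fun t => (10 - s) + (-1) * t := by
        filter_upwards [hsupp] with t ht
        rw [abs_of_nonneg (by linarith [ht.2])]; ring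
      have hm8 : m = 8 - s := by
        rw [hm, integral_congr_ae hae, integral_affine Q1 int_id, h1]; ring
      nlinarith [sq_nonneg (s - 5)]
    · have hs' : 97/10 ≤ s := by nlinarith
      have hae : (fun t : ℝ => |10 - t - s|) =ᵐ[Q1] fun t => (s - 10) + 1 * t := by
        filter_upwards [hsupp] with t ht
        rw [abs_of_nonpos (by linarith [ht.1])]; ring
      have hm8 : m = s - 8 := by
        rw [hm, integral_congr_ae hae, integral_affine Q1 int_id, h1]; ring
      nlinarith [sq_nonneg (s - 11)]

/-- Upper bound: every feasible product expectation is at most `3`. -/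
lemma upper_bound (ε : ℝ) (hε : 0 < ε) (hε4 : ε ≤ 1/4)
    (Q₁ Q₂ : Measure ℝ) (hP1 : IsProbabilityMeasure Q₁) (hP2 : IsProbabilityMeasure Q₂)
    (hs1 : Q₁ (Set.Icc (1 - ε) (3 + ε))ᶜ = 0)
    (h11 : (∫ t, t ∂Q₁) = 2) (h12 : (∫ t, t ^ 2 ∂Q₁) = 5)
    (hi2a : Integrable id Q₂) (hi2b : Integrable (fun t => t ^ 2) Q₂)
    (h21 : (∫ t, t ∂Q₂) = 8) (h22 : (∫ t, t ^ 2 ∂Q₂) = 73) :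
    (∫ p, |10 - p.1 - p.2| ∂(Q₁.prod Q₂)) ≤ 3 := by
  have hae1 : ∀ᵐ t ∂Q₁, t ∈ Icc (1-ε) (3+ε) := by
    rw [ae_iff]
    simpa [Set.compl_def] using hs1
  have hid2 : Integrable (fun t : ℝ => t) Q₂ := by simpa [Function.id_def] using hi2a
  have hcont : Continuous fun p : ℝ × ℝ => |10 - p.1 - p.2| :=
    ((continuous_const.sub continuous_fst).sub continuous_snd).abs
  have hsndInt : Integrable (fun p : ℝ × ℝ => p.2) (Q₁.prod Q₂) := by
    have hmap : Measure.map Prod.snd (Q₁.prod Q₂) = Q₂ := by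
      rw [Measure.map_snd_prod, measure_univ, one_smul]
    have h' : Integrable (fun t : ℝ => t) (Measure.map Prod.snd (Q₁.prod Q₂)) := by
      rw [hmap]; exact hid2
    exact (integrable_map_measure continuous_id.aestronglyMeasurable
      measurable_snd.aemeasurable).mp h'
  have haeP : ∀ᵐ p : ℝ × ℝ ∂(Q₁.prod Q₂), p.1 ∈ Icc (1-ε) (3+ε) := by
    rw [ae_iff]
    have e : {p : ℝ × ℝ | ¬ p.1 ∈ Icc (1-ε) (3+ε)}
        = (Icc (1-ε) (3+ε))ᶜ ×ˢ (univ : Set ℝ) := by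
      ext p; simp
    rw [e, Measure.prod_prod, hs1, zero_mul]
  have habs : Integrable (fun p : ℝ × ℝ => 14 + |p.2|) (Q₁.prod Q₂) :=
    (integrable_const _).add hsndInt.abs
  have hFint : Integrable (fun p : ℝ × ℝ => |10 - p.1 - p.2|) (Q₁.prod Q₂) := by
    refine Integrable.mono' habs hcont.aestronglyMeasurable ?_
    filter_upwards [haeP] with p hp
    have := le_abs_self p.2; have := neg_abs_le p.2
    have h1 := hp.1; have h2 := hp.2
    rw [Real.norm_eq_abs, abs_abs, abs_le]
    constructor <;> linarith
  rw [integral_prod_symm _ hFint]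
  have hg2 : Integrable (fun y : ℝ => (y-8)^2/6 + 3/2) Q₂ := by
    have e : (fun y : ℝ => (y-8)^2/6 + 3/2)
        = fun y : ℝ => (1/6) * y^2 + ((-8/3) * y + (64/6 + 3/2)) := by
      funext y; ring
    rw [e]
    exact (hi2b.const_mul _).add ((hid2.const_mul _).add (integrable_const _))
  have hψint : Integrable (fun y : ℝ => ∫ x, |10 - x - y| ∂Q₁) Q₂ := hFint.integral_prod_right
  calc (∫ y, ∫ x, |10 - x - y| ∂Q₁ ∂Q₂) ≤ ∫ y, ((y-8)^2/6 + 3/2) ∂Q₂ := by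
        refine integral_mono hψint hg2 fun y => ?_
        exact slice_bound ε hε hε4 Q₁ hae1 h11 h12 y
    _ = 3 := by
        have e : (fun y : ℝ => (y-8)^2/6 + 3/2)
            = fun y : ℝ => (1/6) * y^2 + ((-8/3) * y + (64/6 + 3/2)) := by
          funext y; ring
        have i1 : Integrable (fun y : ℝ => (-8/3) * y + (64/6 + 3/2)) Q₂ :=
          (hid2.const_mul _).add (integrable_const _)
        rw [e, integral_add (hi2b.const_mul _) i1,
          integral_add (hid2.const_mul _) (integrable_const _),
          integral_const_mul, integral_const_mul, integral_const, h21, h22]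
        simp
        norm_num


/-- For 0 < ε < (√6−2)/2, the supremum of E[|10 − D₁ − D₂|] over product measures
Q₁ × Q₂, with Q₁ on [1−ε,3+ε] having mean 2 and second moment 5, and Q₂ on ℝ₊
having mean 8 and second moment 73, equals 3. -/
theorem sup_product_abs_eq_three (ε : ℝ) (hε : 0 < ε)
    (hε' : ε < (Real.sqrt 6 - 2) / 2) :
    sSup {r : ℝ | ∃ Q₁ Q₂ : Measure ℝ,
      IsProbabilityMeasure Q₁ ∧ IsProbabilityMeasure Q₂ ∧
      Q₁ (Set.Icc (1 - ε) (3 + ε))ᶜ = 0 ∧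
      (∫ t, t ∂Q₁) = 2 ∧ (∫ t, t ^ 2 ∂Q₁) = 5 ∧
      Q₂ (Set.Ici (0:ℝ))ᶜ = 0 ∧ Integrable id Q₂ ∧
      Integrable (fun t => t ^ 2) Q₂ ∧
      (∫ t, t ∂Q₂) = 8 ∧ (∫ t, t ^ 2 ∂Q₂) = 73 ∧
      r = ∫ p, |10 - p.1 - p.2| ∂(Q₁.prod Q₂)} = 3 := by
  have hε4 : ε ≤ 1/4 := by
    have h6 : Real.sqrt 6 < 5/2 := by
      rw [show (5/2:ℝ) = Real.sqrt ((5/2)^2) by rw [Real.sqrt_sq]; norm_num]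
      exact Real.sqrt_lt_sqrt (by norm_num) (by norm_num)
    linarith
  have hmem : (3:ℝ) ∈ {r : ℝ | ∃ Q₁ Q₂ : Measure ℝ,
      IsProbabilityMeasure Q₁ ∧ IsProbabilityMeasure Q₂ ∧
      Q₁ (Set.Icc (1 - ε) (3 + ε))ᶜ = 0 ∧
      (∫ t, t ∂Q₁) = 2 ∧ (∫ t, t ^ 2 ∂Q₁) = 5 ∧
      Q₂ (Set.Ici (0:ℝ))ᶜ = 0 ∧ Integrable id Q₂ ∧
      Integrable (fun t => t ^ 2) Q₂ ∧
      (∫ t, t ∂Q₂) = 8 ∧ (∫ t, t ^ 2 ∂Q₂) = 73 ∧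
      r = ∫ p, |10 - p.1 - p.2| ∂(Q₁.prod Q₂)} := by
    refine ⟨(2⁻¹ : ℝ≥0∞) • Measure.dirac 1 + (2⁻¹ : ℝ≥0∞) • Measure.dirac 3,
      (2⁻¹ : ℝ≥0∞) • Measure.dirac 5 + (2⁻¹ : ℝ≥0∞) • Measure.dirac 11,
      inferInstance, inferInstance, ?_, ?_, ?_, ?_, ?_, ?_, ?_, ?_, ?_⟩
    · have h1 : (1:ℝ) ∈ Icc (1-ε) (3+ε) := ⟨by linarith, by linarith⟩
      have h3 : (3:ℝ) ∈ Icc (1-ε) (3+ε) := ⟨by linarith, by linarith⟩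
      simp [Measure.dirac_apply, indicator_of_notMem, h1, h3]
    · rw [integral_half_dirac (fun t : ℝ => t) continuous_id]; norm_num
    · rw [integral_half_dirac _ (continuous_pow 2)]; norm_num
    · have h5 : (5:ℝ) ∈ Ici (0:ℝ) := by norm_num
      have h11 : (11:ℝ) ∈ Ici (0:ℝ) := by norm_num
      simp [Measure.dirac_apply, indicator_of_notMem, h5, h11]
    · exact integrable_half_dirac continuous_id 5 11
    · exact integrable_half_dirac (continuous_pow 2) 5 11
    · rw [integral_half_dirac (fun t : ℝ => t) continuous_id]; norm_num
    · rw [integral_half_dirac _ (continuous_pow 2)]; norm_num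
    · -- the product integral equals 3
      have hcont : Continuous fun p : ℝ × ℝ => |10 - p.1 - p.2| :=
        ((continuous_const.sub continuous_fst).sub continuous_snd).abs
      have hinner : ∀ x : ℝ, (∫ y, |10 - x - y|
            ∂((2⁻¹ : ℝ≥0∞) • Measure.dirac (5:ℝ) + (2⁻¹ : ℝ≥0∞) • Measure.dirac 11))
          = (|10 - x - 5| + |10 - x - 11|)/2 :=
        fun x => integral_half_dirac _ ((continuous_const.sub continuous_id).abs) 5 11
      have hFint : Integrable (fun p : ℝ × ℝ => |10 - p.1 - p.2|)
          ((((2⁻¹ : ℝ≥0∞) • Measure.dirac (1:ℝ) + (2⁻¹ : ℝ≥0∞) • Measure.dirac 3)).prod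
           (((2⁻¹ : ℝ≥0∞) • Measure.dirac (5:ℝ) + (2⁻¹ : ℝ≥0∞) • Measure.dirac 11))) := by
        refine (integrable_prod_iff hcont.aestronglyMeasurable).mpr ⟨?_, ?_⟩
        · refine Filter.Eventually.of_forall fun x => ?_
          have h : Integrable (fun y : ℝ => |10 - x - y|)
              ((2⁻¹ : ℝ≥0∞) • Measure.dirac (5:ℝ) + (2⁻¹ : ℝ≥0∞) • Measure.dirac 11) :=
            integrable_half_dirac ((continuous_const.sub continuous_id).abs) 5 11
          exact h
        · have e : (fun x : ℝ => ∫ y, ‖|10 - x - y|‖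
                ∂((2⁻¹ : ℝ≥0∞) • Measure.dirac (5:ℝ) + (2⁻¹ : ℝ≥0∞) • Measure.dirac 11))
              = fun x : ℝ => (|10 - x - 5| + |10 - x - 11|)/2 := by
            funext x
            simp only [Real.norm_eq_abs, abs_abs]
            exact hinner x
          rw [e]
          exact integrable_half_dirac (by continuity) 1 3
      rw [integral_prod _ hFint]
      have e2 : (fun x : ℝ => ∫ y, |10 - x - y|
            ∂((2⁻¹ : ℝ≥0∞) • Measure.dirac (5:ℝ) + (2⁻¹ : ℝ≥0∞) • Measure.dirac 11))
          = fun x : ℝ => (|10 - x - 5| + |10 - x - 11|)/2 := funext hinner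
      rw [e2, integral_half_dirac _ (by continuity) 1 3]
      norm_num
  have hub : ∀ r ∈ {r : ℝ | ∃ Q₁ Q₂ : Measure ℝ,
      IsProbabilityMeasure Q₁ ∧ IsProbabilityMeasure Q₂ ∧
      Q₁ (Set.Icc (1 - ε) (3 + ε))ᶜ = 0 ∧
      (∫ t, t ∂Q₁) = 2 ∧ (∫ t, t ^ 2 ∂Q₁) = 5 ∧
      Q₂ (Set.Ici (0:ℝ))ᶜ = 0 ∧ Integrable id Q₂ ∧
      Integrable (fun t => t ^ 2) Q₂ ∧
      (∫ t, t ∂Q₂) = 8 ∧ (∫ t, t ^ 2 ∂Q₂) = 73 ∧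
      r = ∫ p, |10 - p.1 - p.2| ∂(Q₁.prod Q₂)}, r ≤ 3 := by
    rintro r ⟨Q₁, Q₂, hP1, hP2, hs1, h11, h12, hs2, hi2a, hi2b, h21, h22, rfl⟩
    exact upper_bound ε hε hε4 Q₁ Q₂ hP1 hP2 hs1 h11 h12 hi2a hi2b h21 h22
  exact le_antisymm (csSup_le ⟨3, hmem⟩ hub) (le_csSup ⟨3, hub⟩ hmem)
end
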